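/- arXiv:1608.03697 — 2 statements merged into one kernel-verified Lean document; each statement's English description precedes it below -/
import Mathlib

section
/- Let G = (V,E) be a graph and V' = V − {n} for some vertex n. Let E' be the edge set of G*(V') (edges {u,v} with a path in G whose intermediate vertices lie outside V'), E'' the edge set of the induced subgraph G[V'], and φ({n}) the set of neighbors of n in G. Then E' = E'' ∪ κ(φ({n})), where κ(U) is the set of all unordered pairs of distinct vertices of U. -/
/-- The graph `G*(S)` on vertex subset `S`: distinct `u, v ∈ S` are adjacent iff
there is a path (walk) between `u` and `v` in `G` all of whose intermediate
vertices lie outside `S`. Vertices outside `S` are isolated. -/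
def GStar {V : Type} (G : SimpleGraph V) (S : Set V) : SimpleGraph V where
  Adj u v := u ≠ v ∧ u ∈ S ∧ v ∈ S ∧
    ∃ p : G.Walk u v, ∀ x ∈ p.support, x ≠ u → x ≠ v → x ∉ S
  symm := by
    constructor
    rintro u v ⟨hne, hu, hv, p, hp⟩
    refine ⟨hne.symm, hv, hu, p.reverse, ?_⟩
    intro x hx hxv hxu
    exact hp x (by simpa [SimpleGraph.Walk.support_reverse] using hx) hxu hxv
  loopless := ⟨fun u h => h.1 rfl⟩

/-- `a` and `b` are joined by a walk in `G` whose vertices all lie in `A`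
(i.e. they are in the same component of the induced subgraph on `A`). -/
def ReachIn {V : Type} (G : SimpleGraph V) (A : Set V) (a b : V) : Prop :=
  ∃ p : G.Walk a b, ∀ x ∈ p.support, x ∈ A
lemma stmt6_aux {V : Type} (G : SimpleGraph V) (n u v : V)
    (huv : u ≠ v) (hvn : v ≠ n) :
    ∀ (a : V) (p : G.Walk a v),
      (∀ x ∈ p.support, x = u ∨ x = v ∨ x = n) →
      (a = u ∨ (a = n ∧ G.Adj u n)) →
      G.Adj u v ∨ (G.Adj u n ∧ G.Adj v n) := by
  intro a p
  induction p with
  | nil =>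
    rintro _ (rfl | ⟨rfl, _⟩)
    · exact absurd rfl huv
    · exact absurd rfl hvn
  | @cons a w v h q ih =>
    intro hsupp hstate
    have hw : w = u ∨ w = v ∨ w = n := hsupp w (by simp)
    have hsupp' : ∀ x ∈ q.support, x = u ∨ x = v ∨ x = n := fun x hx =>
      hsupp x (by simp [hx])
    rcases hstate with rfl | ⟨rfl, hun⟩
    · rcases hw with rfl | rfl | rfl
      · exact absurd h (G.loopless.irrefl _)
      · exact Or.inl h
      · exact ih huv hvn hsupp' (Or.inr ⟨rfl, h⟩)
    · rcases hw with rfl | rfl | rfl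
      · exact ih huv hvn hsupp' (Or.inl rfl)
      · exact Or.inr ⟨hun, h.symm⟩
      · exact absurd h (G.loopless.irrefl _)

/-- For `V' = V − {n}`, the edge set of `G*(V')` is
`E'' ∪ κ(φ({n}))`: for `u, v ≠ n`, `{u,v}` is an edge of `G*(V')` iff
`{u,v} ∈ E` or both `u` and `v` are neighbors of `n` in `G`. -/
theorem stmt_6 {V : Type} (G : SimpleGraph V) (n : V) :
    ∀ u v : V, u ≠ n → v ≠ n →
      ((GStar G ({n}ᶜ : Set V)).Adj u v ↔
        (G.Adj u v ∨ (u ≠ v ∧ G.Adj u n ∧ G.Adj v n))) := by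
  intro u v hun hvn
  constructor
  · rintro ⟨huv, _, _, p, hp⟩
    have hsupp : ∀ x ∈ p.support, x = u ∨ x = v ∨ x = n := by
      intro x hx
      by_cases hxu : x = u
      · exact Or.inl hxu
      by_cases hxv : x = v
      · exact Or.inr (Or.inl hxv)
      · have := hp x hx hxu hxv
        simp at this
        exact Or.inr (Or.inr this)
    rcases stmt6_aux G n u v huv hvn u p hsupp (Or.inl rfl) with h | h
    · exact Or.inl h
    · exact Or.inr ⟨huv, h⟩
  · rintro (h | ⟨huv, hun', hvn'⟩)
    · exact ⟨h.ne, by simp [hun], by simp [hvn], h.toWalk, by simp⟩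
    · refine ⟨huv, by simp [hun], by simp [hvn],
        SimpleGraph.Walk.cons hun' (SimpleGraph.Walk.cons hvn'.symm SimpleGraph.Walk.nil), ?_⟩
      intro x hx hxu hxv
      simp at hx
      rcases hx with rfl | rfl | rfl
      · exact absurd rfl hxu
      · simp
      · exact absurd rfl hxv
end

section
/- Let G = (V,E) be a tree and V' ⊆ V. Let G*(V') be the graph on V' with an edge {u,v} iff the (unique) path in G between u and v has all intermediate vertices in V − V'. Then G*(V') is a tree if and only if there do not exist u ∈ V − V' and three distinct vertices v1, v2, v3 ∈ V' such that for each i = 1,2,3, all vertices on the path in G between u and v_i, except v_i itself, lie in V − V'. -/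
open SimpleGraph Walk

variable {V : Type} [DecidableEq V] {G : SimpleGraph V} {S : Set V}

lemma gstar_adj_path {u v : V} (h : (GStar G S).Adj u v) :
    u ≠ v ∧ u ∈ S ∧ v ∈ S ∧
      ∃ p : G.Walk u v, p.IsPath ∧ ∀ x ∈ p.support, x ≠ u → x ≠ v → x ∉ S := by
  obtain ⟨hne, hu, hv, p, hp⟩ := h
  exact ⟨hne, hu, hv, p.bypass, p.bypass_isPath,
    fun x hx => hp x (p.support_bypass_subset hx)⟩

lemma reach_aux : ∀ (n : ℕ) {a b : V} (p : G.Walk a b), p.length = n →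
    ∀ (ha : a ∈ S) (hb : b ∈ S), ((GStar G S).induce S).Reachable ⟨a, ha⟩ ⟨b, hb⟩ := by
  intro n
  induction n using Nat.strong_induction_on with
  | _ n ih =>
    intro a b p hn ha hb
    by_cases hab : a = b
    · subst hab; exact Reachable.refl _
    by_cases hex : ∃ x ∈ p.support, x ≠ a ∧ x ≠ b ∧ x ∈ S
    · obtain ⟨x, hxs, hxa, hxb, hxS⟩ := hex
      have hq := p.take_spec hxs
      have hlen : (p.takeUntil x hxs).length + (p.dropUntil x hxs).length = n := by
        rw [← length_append, hq, hn]
      have h1 : (p.takeUntil x hxs).length ≠ 0 := fun h => hxa (eq_of_length_eq_zero h).symm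
      have h2 : (p.dropUntil x hxs).length ≠ 0 := fun h => hxb (eq_of_length_eq_zero h)
      have l1 : (p.takeUntil x hxs).length < n := by omega
      have l2 : (p.dropUntil x hxs).length < n := by omega
      exact (ih _ l1 (p.takeUntil x hxs) rfl ha hxS).trans
        (ih _ l2 (p.dropUntil x hxs) rfl hxS hb)
    · push_neg at hex
      exact Adj.reachable (⟨hab, ha, hb, p, hex⟩ : (GStar G S).Adj a b)

lemma claimB (e : Sym2 V) {a b : ↥S} (w : ((GStar G S).induce S).Walk a b) :
    (∃ q : G.Walk ↑a ↑b, e ∉ q.edges) ∨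
      ∃ (x z : ↥S) (p : G.Walk ↑x ↑z), p.IsPath ∧ s(x, z) ∈ w.edges ∧
        (∀ t ∈ p.support, t ≠ ↑x → t ≠ ↑z → t ∉ S) ∧ e ∈ p.edges := by
  induction w with
  | nil => exact Or.inl ⟨Walk.nil, by simp⟩
  | @cons a x b h w ih =>
    obtain ⟨-, -, -, p, hp, hpS⟩ := gstar_adj_path (h : (GStar G S).Adj ↑a ↑x)
    by_cases he : e ∈ p.edges
    · exact Or.inr ⟨a, x, p, hp, by simp, hpS, he⟩
    · rcases ih with ⟨q, hq⟩ | ⟨x', z', p', h1, h2, h3, h4⟩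
      · exact Or.inl ⟨p.append q, by
        intro hh; have h' : e ∈ p.edges ++ q.edges := Walk.edges_append p q ▸ hh
        exact (List.mem_append.mp h').elim he hq⟩
      · exact Or.inr ⟨x', z', p', h1, by simp [h2], h3, h4⟩

lemma walk_cons_of_ne {V : Type} {G : SimpleGraph V} {u v : V} (p : G.Walk u v) (h : u ≠ v) :
    ∃ (y : V) (ha : G.Adj u y) (q : G.Walk y v), p = Walk.cons ha q := by
  cases p with
  | nil => exact absurd rfl h
  | cons ha q => exact ⟨_, ha, q, rfl⟩


/-- For a tree `G` and nonempty `V' ⊆ V`, the graph `G*(V')` (as a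
graph on vertex set `V'`) is a tree iff there do not exist `u ∈ V − V'` and three
distinct vertices `v₁, v₂, v₃ ∈ V'` such that for each `i`, all vertices on the
path in `G` between `u` and `vᵢ`, except `vᵢ` itself, lie in `V − V'`. -/
theorem stmt_8 {V : Type} [Fintype V] (G : SimpleGraph V) (hG : G.IsTree)
    (V' : Set V) (hV' : V'.Nonempty) :
    ((GStar G V').induce V').IsTree ↔
      ¬ ∃ (u v₁ v₂ v₃ : V), u ∉ V' ∧ v₁ ∈ V' ∧ v₂ ∈ V' ∧ v₃ ∈ V' ∧
        v₁ ≠ v₂ ∧ v₁ ≠ v₃ ∧ v₂ ≠ v₃ ∧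
        (∃ p : G.Walk u v₁, ∀ x ∈ p.support, x ≠ v₁ → x ∉ V') ∧
        (∃ p : G.Walk u v₂, ∀ x ∈ p.support, x ≠ v₂ → x ∉ V') ∧
        (∃ p : G.Walk u v₃, ∀ x ∈ p.support, x ≠ v₃ → x ∉ V') := by
  haveI := Classical.decEq V
  constructor
  · -- tree → no config
    rintro htree ⟨u, v₁, v₂, v₃, huS, h1, h2, h3, h12, h13, h23, hw1, hw2, hw3⟩
    have mkadj : ∀ (a b : V), a ∈ V' → b ∈ V' → a ≠ b →
        (∃ p : G.Walk u a, ∀ x ∈ p.support, x ≠ a → x ∉ V') →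
        (∃ p : G.Walk u b, ∀ x ∈ p.support, x ≠ b → x ∉ V') → (GStar G V').Adj a b := by
      rintro a b ha hb hab ⟨pa, hpa⟩ ⟨pb, hpb⟩
      refine ⟨hab, ha, hb, pa.reverse.append pb, ?_⟩
      intro t ht hta htb
      rw [Walk.mem_support_append_iff] at ht
      rcases ht with ht | ht
      · exact hpa t (by simpa [Walk.support_reverse] using ht) hta
      · exact hpb t ht htb
    have a12 := mkadj v₁ v₂ h1 h2 h12 hw1 hw2
    have a23 := mkadj v₂ v₃ h2 h3 h23 hw2 hw3
    have a31 := (mkadj v₁ v₃ h1 h3 h13 hw1 hw3).symm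
    let Ind := (GStar G V').induce V'
    have A12 : Ind.Adj ⟨v₁, h1⟩ ⟨v₂, h2⟩ := a12
    have A23 : Ind.Adj ⟨v₂, h2⟩ ⟨v₃, h3⟩ := a23
    have A31 : Ind.Adj ⟨v₃, h3⟩ ⟨v₁, h1⟩ := a31
    have hc : (Walk.cons A12 (Walk.cons A23 (Walk.cons A31 Walk.nil))).IsCycle := by
      simp [Walk.isCycle_def, Walk.isTrail_def, Sym2.eq_iff, Subtype.ext_iff, h12, h13, h23,
        h12.symm, h13.symm, h23.symm, Ne.symm]
    exact htree.IsAcyclic _ hc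
  · -- no config → tree
    intro hcfg
    have hconn : ((GStar G V').induce V').Connected := by
      rw [connected_iff]
      refine ⟨?_, ⟨⟨hV'.some, hV'.some_mem⟩⟩⟩
      rintro ⟨a, ha⟩ ⟨b, hb⟩
      obtain ⟨p⟩ := hG.isConnected.preconnected a b
      exact reach_aux p.length p rfl ha hb
    refine ⟨hconn, ?_⟩
    intro v c hc
    cases c with
    | nil => exact hc.not_of_nil
    | @cons _ x _ h q =>
      obtain ⟨hne, -, -, p₁, hp₁path, hp₁S⟩ := gstar_adj_path (h : (GStar G V').Adj ↑v ↑x)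
      obtain ⟨y, hadj, q₁, rfl⟩ := walk_cons_of_ne p₁ hne
      set e : Sym2 V := s(↑v, y) with he_def
      have hbridge := (isAcyclic_iff_forall_adj_isBridge.mp hG.IsAcyclic hadj)
      have hq₁e : e ∉ q₁.edges := ((Walk.isTrail_cons _ _).mp hp₁path.isTrail).2
      have hvq₁ : (↑v : V) ∉ q₁.support := by
        have := hp₁path.support_nodup
        simp only [Walk.support_cons, List.nodup_cons] at this
        exact this.1
      rcases claimB e q with ⟨w', hw'⟩ | ⟨x', z', p, hpath, hmem, hS, hep⟩
      · -- reachability around the cycle avoiding bridge e : contradiction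
        refine hbridge (reachable_delete_edges_iff_exists_walk.mpr ⟨(q₁.append w').reverse, ?_⟩)
        simp [Walk.edges_reverse, Walk.edges_append, hq₁e, hw']
        intro hh; have h' : s(↑v, y) ∈ q₁.edges ++ w'.edges := Walk.edges_append q₁ w' ▸ hh
        exact (List.mem_append.mp h').elim hq₁e hw'
      · -- some edge-path of the rest of the cycle uses e
        have hvp : (↑v : V) ∈ p.support := Walk.fst_mem_support_of_mem_edges p hep
        have hvxz : v = x' ∨ v = z' := by
          by_contra hcon
          push_neg at hcon
          exact hS _ hvp (fun hh => hcon.1 (Subtype.ext hh))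
            (fun hh => hcon.2 (Subtype.ext hh)) v.2
        -- orient: get w with s(v,w) ∈ q.edges and path pp : v → w
        obtain ⟨w, hvw, pp, hpppath, hppS, hppe⟩ :
            ∃ (w : ↥V'), s(v, w) ∈ q.edges ∧ ∃ pp : G.Walk ↑v ↑w, pp.IsPath ∧
              (∀ t ∈ pp.support, t ≠ ↑v → t ≠ ↑w → t ∉ V') ∧ e ∈ pp.edges := by
          rcases hvxz with rfl | rfl
          · exact ⟨z', hmem, p, hpath, hS, hep⟩
          · refine ⟨x', by rwa [Sym2.eq_swap], p.reverse, hpath.reverse, ?_, by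
              simpa [Walk.edges_reverse] using hep⟩
            intro t ht hta htb
            exact hS t (by simpa [Walk.support_reverse] using ht) htb hta
        have hvwne : v ≠ w := (Walk.adj_of_mem_edges q hvw).ne
        -- first edge of pp is e
        obtain ⟨y', hadj', pp', rfl⟩ := walk_cons_of_ne pp (fun hh => hvwne (Subtype.ext hh))
        have hvpp' : (↑v : V) ∉ pp'.support := by
          have := hpppath.support_nodup
          simp only [Walk.support_cons, List.nodup_cons] at this
          exact this.1
        have hy' : y' = y := by
          have hppe' : e ∈ s((↑v : V), y') :: pp'.edges := by
            rw [← Walk.edges_cons hadj' pp']; exact hppe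
          rcases List.mem_cons.mp hppe' with hh | hh
          · rw [he_def] at hh
            rcases Sym2.eq_iff.mp hh.symm with ⟨-, h'⟩ | ⟨-, h'⟩
            · exact h'
            · exact absurd h' hadj'.ne'
          · rw [he_def] at hh
            exact absurd (Walk.fst_mem_support_of_mem_edges pp' hh) hvpp'
        subst hy'
        -- the edge s(v,x) of the cycle is not in q.edges
        have hfq : s(v, x) ∉ q.edges := by
          have := hc.edges_nodup
          simp only [Walk.edges_cons, List.nodup_cons] at this
          exact this.1
        have hxw : x ≠ w := by
          rintro rfl
          exact hfq hvw
        -- y' ∉ V'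
        have hyq₁ : y' ∈ q₁.support := q₁.start_mem_support
        have hypp' : y' ∈ pp'.support := pp'.start_mem_support
        have hyS : y' ∉ V' := by
          intro hyV
          have hy2 : y' = ↑x := by
            by_contra hcon
            exact hp₁S y' (by rw [Walk.support_cons]; exact List.mem_cons_of_mem _ hyq₁) hadj.ne' hcon hyV
          have hy3 : y' = ↑w := by
            by_contra hcon
            exact hppS y' (by rw [Walk.support_cons]; exact List.mem_cons_of_mem _ hypp') hadj.ne' hcon hyV
          exact hxw (Subtype.ext (hy2 ▸ hy3 ▸ rfl))
        -- build the forbidden configuration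
        refine hcfg ⟨y', ↑v, ↑x, ↑w, hyS, v.2, x.2, w.2, hne, ?_, ?_, ?_, ?_, ?_⟩
        · exact fun hh => hvwne (Subtype.ext hh)
        · exact fun hh => hxw (Subtype.ext hh)
        · refine ⟨Walk.cons hadj.symm Walk.nil, ?_⟩
          intro t ht htv
          change t ∈ [y', (↑v : V)] at ht
          simp only [Walk.support_cons, Walk.support_nil, List.mem_cons,
            List.mem_singleton] at ht
          rcases ht with rfl | ht
          · exact hyS
          · simp at ht; exact absurd ht htv
        · refine ⟨q₁, ?_⟩
          intro t ht htx
          have htv : t ≠ ↑v := fun hh => hvq₁ (hh ▸ ht)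
          exact hp₁S t (by rw [Walk.support_cons]; exact List.mem_cons_of_mem _ ht) htv htx
        · refine ⟨pp', ?_⟩
          intro t ht htw
          have htv : t ≠ ↑v := fun hh => hvpp' (hh ▸ ht)
          exact hppS t (by rw [Walk.support_cons]; exact List.mem_cons_of_mem _ ht) htv htw
end
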